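/- Let D = (V, A, ψ) be a multidigraph, let s, t ∈ V, and let k ∈ ℕ. Let P and Q be two nonempty subsets of V with V = P ⊔ Q, and let C be a subset of A(P,Q). If E is an acyclic (k − |C|)-element subset of A satisfying S(E) = P and T(E) = Q, then E ∪ C belongs to U_k and satisfies S(E ∪ C) = P and (E ∪ C) ∩ A(P,Q) = C. -/

import Mathlib

/-!
A multidigraph is given by two finite types `V` (vertices) and `A` (arcs)
together with a map `ψ : A → V × V` sending each arc to its (source, target) pair.
For a subset `B ⊆ A`, the induced subdigraph `D⟨B⟩` has vertex set `V` and arc set `B`.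
-/

/-- There is an arc of `B` from `v` to `w` in the subdigraph `D⟨B⟩`. -/
def ArcStep {V A : Type*} (ψ : A → V × V) (B : Set A) (v w : V) : Prop :=
  ∃ a ∈ B, ψ a = (v, w)

/-- `v` can `B`-reach `w`: the subdigraph `D⟨B⟩` has a walk from `v` to `w`. -/
def CanReach {V A : Type*} (ψ : A → V × V) (B : Set A) (v w : V) : Prop :=
  Relation.ReflTransGen (ArcStep ψ B) v w

/-- `B ⊆ A` is acyclic: the subdigraph `D⟨B⟩` has no directed cycles
(equivalently, no closed walk of positive length). -/
def IsAcyclic {V A : Type*} (ψ : A → V × V) (B : Set A) : Prop :=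
  ∀ v : V, ¬ Relation.TransGen (ArcStep ψ B) v v

/-- `B` is an `s`-convergence: `B` is acyclic and `s` is a to-root of `D⟨B⟩`,
i.e. every vertex can `B`-reach `s`. -/
def IsConvergence {V A : Type*} (ψ : A → V × V) (B : Set A) (s : V) : Prop :=
  IsAcyclic ψ B ∧ ∀ v : V, CanReach ψ B v s

/-- `γ_k(s)`: the number of `s`-convergences of size `k`. -/
noncomputable def gammaCount {V A : Type*} (ψ : A → V × V) (k : ℕ) (s : V) : ℕ :=
  {B : Set A | IsConvergence ψ B s ∧ B.ncard = k}.ncard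

/-- The attraction basin of `s` with respect to `B`: all vertices that can `B`-reach `s`. -/
def basin {V A : Type*} (ψ : A → V × V) (B : Set A) (s : V) : Set V :=
  {v : V | CanReach ψ B v s}

/-- `A(P,Q)`: the set of arcs with source in `P` and target in `Q`. -/
def arcsFromTo {V A : Type*} (ψ : A → V × V) (P Q : Set V) : Set A :=
  {a : A | (ψ a).1 ∈ P ∧ (ψ a).2 ∈ Q}

/-- The outdegree of a vertex: the number of arcs with source `v`. -/
noncomputable def outDeg {V A : Type*} (ψ : A → V × V) (v : V) : ℕ :=
  {a : A | (ψ a).1 = v}.ncard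

/-- The indegree of a vertex: the number of arcs with target `v`. -/
noncomputable def inDeg {V A : Type*} (ψ : A → V × V) (v : V) : ℕ :=
  {a : A | (ψ a).2 = v}.ncard

/-- The digraph is balanced: each vertex has outdegree equal to indegree. -/
def IsBalanced {V A : Type*} (ψ : A → V × V) : Prop :=
  ∀ v : V, outDeg ψ v = inDeg ψ v

/-- `U_k`: the set of all acyclic `k`-element subsets `B` of `A` such that each
vertex can `B`-reach `s` or can `B`-reach `t`. -/
def Uset {V A : Type*} (ψ : A → V × V) (s t : V) (k : ℕ) : Set (Set A) :=
  {B : Set A | IsAcyclic ψ B ∧ B.ncard = k ∧ basin ψ B s ∪ basin ψ B t = Set.univ}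

/-- `X_i^{P,Q}`: the set of all acyclic `i`-element subsets `B` of `A` with
`S(B) = P` and `T(B) = Q` (empty for negative `i`). -/
def Xset {V A : Type*} (ψ : A → V × V) (s t : V) (P Q : Set V) (i : ℤ) : Set (Set A) :=
  {B : Set A | IsAcyclic ψ B ∧ (B.ncard : ℤ) = i ∧ basin ψ B s = P ∧ basin ψ B t = Q}

/-- `|X_i^{P,Q}|`. -/
noncomputable def Xcount {V A : Type*} (ψ : A → V × V) (s t : V) (P Q : Set V) (i : ℤ) : ℕ :=
  (Xset ψ s t P Q i).ncard

/-- If `E` is an acyclic `(k − |C|)`-element subset of `A` with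
`S(E) = P` and `T(E) = Q`, then `E ∪ C ∈ U_k`, `S(E ∪ C) = P` and
`(E ∪ C) ∩ A(P,Q) = C`. -/
theorem union_mem_U {V A : Type*} [Fintype V] [Fintype A]
    (ψ : A → V × V) (s t : V) (k : ℕ)
    (P Q : Set V) (hP : P.Nonempty) (hQ : Q.Nonempty)
    (hunion : P ∪ Q = Set.univ) (hdisj : P ∩ Q = ∅)
    (C : Set A) (hC : C ⊆ arcsFromTo ψ P Q)
    (E : Set A) (hE : IsAcyclic ψ E)
    (hcard : (E.ncard : ℤ) = (k : ℤ) - C.ncard)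
    (hSE : basin ψ E s = P) (hTE : basin ψ E t = Q) :
    E ∪ C ∈ Uset ψ s t k ∧ basin ψ (E ∪ C) s = P ∧
      (E ∪ C) ∩ arcsFromTo ψ P Q = C := by
  have hsP : s ∈ P := hSE ▸ (Relation.ReflTransGen.refl : CanReach ψ E s s)
  have htQ : t ∈ Q := hTE ▸ (Relation.ReflTransGen.refl : CanReach ψ E t t)
  have hPQ : ∀ v : V, v ∈ P → v ∉ Q := by
    intro v hvP hvQ
    have h : v ∈ P ∩ Q := ⟨hvP, hvQ⟩
    rw [hdisj] at h
    exact h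
  have hcov : ∀ v : V, v ∈ P ∨ v ∈ Q := by
    intro v
    have : v ∈ P ∪ Q := hunion ▸ Set.mem_univ v
    exact this
  -- closure of basins under a step
  have hstep : ∀ a ∈ E, ArcStep ψ E (ψ a).1 (ψ a).2 := fun a ha => ⟨a, ha, Prod.mk.eta.symm⟩
  have hback : ∀ a ∈ E, ((ψ a).2 ∈ P → (ψ a).1 ∈ P) ∧ ((ψ a).2 ∈ Q → (ψ a).1 ∈ Q) := by
    intro a ha
    constructor
    · intro h2
      rw [← hSE] at h2 ⊢
      exact Relation.ReflTransGen.head (hstep a ha) h2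
    · intro h2
      rw [← hTE] at h2 ⊢
      exact Relation.ReflTransGen.head (hstep a ha) h2
  -- E arcs with source in P have target in P; with source in Q have target in Q
  have hEfwdP : ∀ a ∈ E, (ψ a).1 ∈ P → (ψ a).2 ∈ P := by
    intro a ha h1
    rcases hcov (ψ a).2 with h | h
    · exact h
    · exact absurd ((hback a ha).2 h) (hPQ _ h1)
  have hEfwdQ : ∀ a ∈ E, (ψ a).1 ∈ Q → (ψ a).2 ∈ Q := by
    intro a ha h1
    rcases hcov (ψ a).2 with h | h
    · exact absurd h1 (hPQ _ ((hback a ha).1 h))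
    · exact h
  set R := ArcStep ψ (E ∪ C) with hR
  -- L1 : walks starting in Q stay in Q and use only E
  have L1 : ∀ x y : V, Relation.ReflTransGen R x y → x ∈ Q →
      Relation.ReflTransGen (ArcStep ψ E) x y ∧ y ∈ Q := by
    intro x y h
    induction h using Relation.ReflTransGen.head_induction_on with
    | refl => exact fun hx => ⟨Relation.ReflTransGen.refl, hx⟩
    | head h' _ ih =>
      intro hx
      rename_i x' z _
      obtain ⟨a, haEC, hψ⟩ := h'
      rcases haEC with haE | haC
      · have h1 : (ψ a).1 = x' := by rw [hψ]
        have h2 : (ψ a).2 = z := by rw [hψ]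
        have hzQ : z ∈ Q := h2 ▸ hEfwdQ a haE (h1 ▸ hx)
        obtain ⟨w1, w2⟩ := ih hzQ
        exact ⟨Relation.ReflTransGen.head ⟨a, haE, hψ⟩ w1, w2⟩
      · have := (hC haC).1
        rw [hψ] at this
        exact absurd hx (hPQ _ this)
  -- L2 : walks ending in P use only E
  have L2 : ∀ x y : V, Relation.ReflTransGen R x y → y ∈ P →
      Relation.ReflTransGen (ArcStep ψ E) x y := by
    intro x y h
    induction h using Relation.ReflTransGen.head_induction_on with
    | refl => exact fun _ => Relation.ReflTransGen.refl
    | head h' hrest ih =>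
      intro hy
      obtain ⟨a, haEC, hψ⟩ := h'
      rcases haEC with haE | haC
      · exact Relation.ReflTransGen.head ⟨a, haE, hψ⟩ (ih hy)
      · have h2 := (hC haC).2
        rw [hψ] at h2
        exact absurd (L1 _ y hrest h2).2 (hPQ _ hy)
  -- acyclicity of E ∪ C
  have hacy : IsAcyclic ψ (E ∪ C) := by
    intro v hv
    obtain ⟨w, hvw, hwv⟩ := Relation.TransGen.head'_iff.mp hv
    obtain ⟨a, haEC, hψ⟩ := hvw
    rcases haEC with haE | haC
    · rcases hcov v with hvP | hvQ
      · exact hE v (Relation.TransGen.head' ⟨a, haE, hψ⟩ (L2 w v hwv hvP))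
      · have h1 : (ψ a).1 ∈ Q := by rw [hψ]; exact hvQ
        have hwQ : w ∈ Q := by
          have := hEfwdQ a haE h1
          rw [hψ] at this; exact this
        exact hE v (Relation.TransGen.head' ⟨a, haE, hψ⟩ (L1 w v hwv hwQ).1)
    · have hwQ : w ∈ Q := by have := (hC haC).2; rw [hψ] at this; exact this
      have hvP : v ∈ P := by have := (hC haC).1; rw [hψ] at this; exact this
      exact absurd (L1 w v hwv hwQ).2 (hPQ _ hvP)
  -- E and C are disjoint
  have hEC : E ∩ C = ∅ := by
    ext a
    simp only [Set.mem_inter_iff, Set.mem_empty_iff_false, iff_false, not_and]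
    intro haE haC
    exact hPQ _ (hC haC).1 ((hback a haE).2 (hC haC).2)
  have hncard : (E ∪ C).ncard = k := by
    have hdisjEC : Disjoint E C := Set.disjoint_iff_inter_eq_empty.mpr hEC
    have := Set.ncard_union_eq hdisjEC E.toFinite C.toFinite
    have : ((E ∪ C).ncard : ℤ) = (E.ncard : ℤ) + C.ncard := by exact_mod_cast this
    omega
  -- monotone basins
  have hmono : ∀ u : V, ∀ x y : V, Relation.ReflTransGen (ArcStep ψ E) x y →
      Relation.ReflTransGen R x y := by
    intro _ x y h
    exact Relation.ReflTransGen.mono (show ArcStep ψ E ≤ R from fun p q ⟨a, ha, hψ⟩ => ⟨a, Or.inl ha, hψ⟩) x y h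
  have hbasins : basin ψ (E ∪ C) s = P := by
    ext v
    constructor
    · intro hv
      rw [← hSE]
      exact L2 v s hv hsP
    · intro hv
      rw [← hSE] at hv
      exact hmono s v s hv
  refine ⟨⟨hacy, hncard, ?_⟩, hbasins, ?_⟩
  · apply Set.eq_univ_of_forall
    intro v
    rcases hcov v with hvP | hvQ
    · exact Or.inl (hbasins ▸ hvP)
    · rw [← hTE] at hvQ
      exact Or.inr (hmono t v t hvQ)
  · ext a
    simp only [Set.mem_inter_iff, Set.mem_union]
    constructor
    · rintro ⟨haE | haC, hPQa⟩
      · exact absurd ((hback a haE).2 hPQa.2) (hPQ _ hPQa.1)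
      · exact haC
    · intro haC
      exact ⟨Or.inr haC, hC haC⟩
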